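/- Assume m > 1 and set γ := (2-α)/(m-1), so that γ·m = 2-α+γ. Then (1-z)^{-γm} · ∫_z^1 ρ·Q(z/ρ)·(1-ρ)^γ dρ tends to b^α·Γ(1+γ)/Γ(3-α+γ) as z → 1⁻. -/

import Mathlib

open MeasureTheory Set Filter

/-- The kernel profile `Q(η) = (1/Γ(1-α)) ∫_η^1 (1-σ^{1/b})^{-α} σ^{1-d} dσ` for
`η ∈ (0,1)`; for `η ≥ 1` the interval `(η,1)` is empty, so `Q(η) = 0`. -/
noncomputable def Qker (d : ℕ) (α b : ℝ) (η : ℝ) : ℝ :=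
  (1 / Real.Gamma (1 - α)) *
    ∫ σ in Set.Ioo η 1, (1 - σ ^ (1 / b)) ^ (-α) * σ ^ (1 - (d:ℝ))


open intervalIntegral

section helpers

variable {d : ℕ} {α b : ℝ}

lemma oneSub_intInt {c : ℝ} (hc : -1 < c) (a : ℝ) :
    IntervalIntegrable (fun σ : ℝ => (1-σ)^c) volume a 1 := by
  have h := (intervalIntegrable_rpow' (a := 1-a) (b := 1-1) hc).comp_sub_left (c := 1)
  simpa using h

lemma oneSub_integral {c : ℝ} (hc : -1 < c) {a : ℝ} (_ha : a ≤ 1) :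
    ∫ σ in a..1, (1-σ)^c = (1-a)^(c+1)/(c+1) := by
  have h := intervalIntegral.integral_comp_sub_left (a := a) (b := 1) (fun x : ℝ => x^c) 1
  rw [h, integral_rpow (Or.inl hc)]
  rw [sub_self, Real.zero_rpow (by linarith : c + 1 ≠ 0)]
  ring

lemma fker_meas : Measurable (fun σ : ℝ => (1 - σ ^ (1/b)) ^ (-α) * σ ^ (1 - (d:ℝ))) := by
  fun_prop

lemma fker_nonneg (hb0 : 0 < b) {σ : ℝ} (h0 : 0 ≤ σ) (h1 : σ ≤ 1) :
    0 ≤ (1 - σ ^ (1/b)) ^ (-α) * σ ^ (1 - (d:ℝ)) := by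
  have : σ ^ (1/b) ≤ 1 := Real.rpow_le_one h0 h1 (by positivity)
  exact mul_nonneg (Real.rpow_nonneg (by linarith) _) (Real.rpow_nonneg h0 _)

lemma fker_bound (hd : 1 ≤ d) (hα : α ∈ Ioo (0:ℝ) 1) (hb0 : 0 < b) (hb1 : b ≤ 1)
    {η σ : ℝ} (hη : 0 < η) (hσ : σ ∈ Ioo η 1) :
    (1 - σ ^ (1/b)) ^ (-α) * σ ^ (1 - (d:ℝ)) ≤ (1-σ)^(-α) * η^(1-(d:ℝ)) := by
  have hσ0 : 0 < σ := hη.trans hσ.1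
  have hσ1 : σ < 1 := hσ.2
  have hbinv : (1:ℝ) ≤ 1/b := by
    rw [le_div_iff₀ hb0]; linarith
  have h1 : σ ^ (1/b) ≤ σ := by
    have := Real.rpow_le_rpow_of_exponent_ge hσ0 hσ1.le hbinv
    simpa using this
  have h2 : 0 < 1 - σ := by linarith
  have h3 : 0 < 1 - σ ^ (1/b) := by
    have : σ ^ (1/b) < 1 := Real.rpow_lt_one hσ0.le hσ1 (by positivity)
    linarith
  have hA : (1 - σ ^ (1/b)) ^ (-α) ≤ (1-σ)^(-α) :=
    Real.rpow_le_rpow_of_nonpos h2 (by linarith) (by linarith [hα.1])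
  have hB : σ ^ (1-(d:ℝ)) ≤ η ^ (1-(d:ℝ)) := by
    apply Real.rpow_le_rpow_of_nonpos hη hσ.1.le
    simp only [sub_nonpos]
    exact_mod_cast hd
  exact mul_le_mul hA hB (Real.rpow_nonneg hσ0.le _) (Real.rpow_nonneg h2.le _)

end helpers

section qker
variable {d : ℕ} {α b : ℝ}

lemma bound_integrableOn (hα : α ∈ Ioo (0:ℝ) 1) {η : ℝ} (hη1 : η ≤ 1) (C : ℝ) :
    IntegrableOn (fun σ : ℝ => (1-σ)^(-α) * C) (Ioo η 1) volume := by
  have h : IntervalIntegrable (fun σ : ℝ => (1-σ)^(-α) * C) volume η 1 :=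
    (oneSub_intInt (by linarith [hα.2] : (-1:ℝ) < -α) η).mul_const C
  rw [intervalIntegrable_iff_integrableOn_Ioc_of_le hη1] at h
  exact h.mono_set Ioo_subset_Ioc_self

lemma fker_integrableOn (hd : 1 ≤ d) (hα : α ∈ Ioo (0:ℝ) 1) (hb0 : 0 < b) (hb1 : b ≤ 1)
    {η : ℝ} (hη : 0 < η) :
    IntegrableOn (fun σ : ℝ => (1 - σ ^ (1/b)) ^ (-α) * σ ^ (1 - (d:ℝ)))
      (Ioo η 1) volume := by
  rcases le_or_gt 1 η with h | h
  · rw [Ioo_eq_empty (by linarith)]; exact integrableOn_empty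
  apply Integrable.mono' (bound_integrableOn hα h.le (η^(1-(d:ℝ))))
    fker_meas.aestronglyMeasurable
  · filter_upwards [ae_restrict_mem measurableSet_Ioo] with σ hσ
    rw [Real.norm_of_nonneg (fker_nonneg hb0 (hη.trans hσ.1).le hσ.2.le)]
    exact fker_bound hd hα hb0 hb1 hη hσ

lemma Qker_nonneg (hα1 : α < 1) (hb0 : 0 < b) {η : ℝ} (hη : 0 < η) : 0 ≤ Qker d α b η := by
  have hΓ : 0 < Real.Gamma (1-α) := Real.Gamma_pos_of_pos (by linarith)
  apply mul_nonneg (by positivity)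
  apply setIntegral_nonneg measurableSet_Ioo
  intro σ hσ
  exact fker_nonneg hb0 (hη.trans hσ.1).le hσ.2.le

lemma Qker_le (hd : 1 ≤ d) (hα : α ∈ Ioo (0:ℝ) 1) (hb0 : 0 < b) (hb1 : b ≤ 1)
    {η : ℝ} (hη : η ∈ Ioo (0:ℝ) 1) :
    Qker d α b η ≤ (1 / Real.Gamma (1-α)) * (η^(1-(d:ℝ)) * ((1-η)^(1-α)/(1-α))) := by
  have hΓ : 0 < Real.Gamma (1-α) := Real.Gamma_pos_of_pos (by linarith [hα.2])
  apply mul_le_mul_of_nonneg_left _ (by positivity)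
  have h1 : ∫ σ in Ioo η 1, (1 - σ ^ (1/b)) ^ (-α) * σ ^ (1 - (d:ℝ))
      ≤ ∫ σ in Ioo η 1, (1-σ)^(-α) * η^(1-(d:ℝ)) := by
    apply setIntegral_mono_on (fker_integrableOn hd hα hb0 hb1 hη.1)
      (bound_integrableOn hα hη.2.le _) measurableSet_Ioo
    intro σ hσ
    exact fker_bound hd hα hb0 hb1 hη.1 hσ
  refine h1.trans (le_of_eq ?_)
  rw [← integral_Ioc_eq_integral_Ioo, ← intervalIntegral.integral_of_le hη.2.le,
    intervalIntegral.integral_mul_const, oneSub_integral (by linarith [hα.2]) hη.2.le]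
  rw [show -α + 1 = 1 - α by ring]
  ring

lemma Qker_antitoneOn (hd : 1 ≤ d) (hα : α ∈ Ioo (0:ℝ) 1) (hb0 : 0 < b) (hb1 : b ≤ 1) :
    AntitoneOn (Qker d α b) (Ioi (0:ℝ)) := by
  intro x hx y hy hxy
  rcases le_or_gt 1 y with h | h
  · have : Qker d α b y = 0 := by
      rw [Qker, Ioo_eq_empty (by linarith), setIntegral_empty, mul_zero]
    rw [this]; exact Qker_nonneg hα.2 hb0 hx
  have hΓ : 0 < Real.Gamma (1-α) := Real.Gamma_pos_of_pos (by linarith [hα.2])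
  apply mul_le_mul_of_nonneg_left _ (by positivity)
  apply setIntegral_mono_set (fker_integrableOn hd hα hb0 hb1 hx)
  · filter_upwards [ae_restrict_mem measurableSet_Ioo] with σ hσ
    exact fker_nonneg hb0 ((Set.mem_Ioi.mp hx).trans hσ.1).le hσ.2.le
  · exact HasSubset.Subset.eventuallyLE (Ioo_subset_Ioo_left hxy)


lemma real_beta {p q : ℝ} (hp : 0 < p) (hq : 0 < q) :
    ∫ t in (0:ℝ)..1, t ^ (p-1) * (1-t) ^ (q-1)
      = Real.Gamma p * Real.Gamma q / Real.Gamma (p+q) := by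
  have h := Complex.Gamma_mul_Gamma_eq_betaIntegral (s := (p:ℂ)) (t := (q:ℂ))
    (by simpa using hp) (by simpa using hq)
  have hbeta : Complex.betaIntegral (p:ℂ) (q:ℂ)
      = ((∫ t in (0:ℝ)..1, t ^ (p-1) * (1-t) ^ (q-1) : ℝ) : ℂ) := by
    rw [Complex.betaIntegral, ← intervalIntegral.integral_ofReal]
    apply intervalIntegral.integral_congr
    intro x hx
    rw [Set.uIcc_of_le (by norm_num : (0:ℝ) ≤ 1)] at hx
    have hx0 : 0 ≤ x := hx.1
    have hx1 : 0 ≤ 1 - x := by linarith [hx.2]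
    simp only []
    rw [Complex.ofReal_mul, Complex.ofReal_cpow hx0, Complex.ofReal_cpow hx1]
    push_cast
    ring
  rw [hbeta, ← Complex.ofReal_add, Complex.Gamma_ofReal, Complex.Gamma_ofReal,
    Complex.Gamma_ofReal, ← Complex.ofReal_mul, ← Complex.ofReal_mul] at h
  have h2 := Complex.ofReal_injective h
  have hΓ : Real.Gamma (p+q) ≠ 0 := (Real.Gamma_pos_of_pos (by linarith)).ne'
  field_simp [h2]
  rw [h2]; ring

section rtendsto
variable {d : ℕ} {α b : ℝ}

lemma slope_tendsto {u : ℝ} :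
    Tendsto (fun s : ℝ => (1 - (1-s*u)^(1/b))/s) (nhdsWithin 0 (Ioi 0)) (nhds (u/b)) := by
  have inner : HasDerivAt (fun s : ℝ => 1 - s*u) (-u) 0 := by
    simpa using ((hasDerivAt_id (0:ℝ)).mul_const u).const_sub 1
  have outer : HasDerivAt (fun s : ℝ => (1-s*u)^(1/b)) (-u * (1/b) * (1-0*u)^(1/b-1)) 0 := by
    have := inner.rpow_const (p := 1/b) (Or.inl (by norm_num))
    simpa using this
  have g : HasDerivAt (fun s : ℝ => 1 - (1-s*u)^(1/b)) (u/b) 0 := by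
    have := outer.const_sub 1
    simpa [neg_mul, one_div, div_eq_mul_inv] using this
  have h2 : Tendsto (slope (fun s : ℝ => 1 - (1-s*u)^(1/b)) 0) (nhdsWithin 0 (Ioi 0)) (nhds (u/b)) :=
    (hasDerivAt_iff_tendsto_slope.mp g).mono_left
      (nhdsWithin_mono 0 (fun x hx => Set.mem_compl_singleton_iff.mpr (ne_of_gt hx)))
  apply h2.congr
  intro s
  simp [slope_def_field]

lemma key_identity (hs' : ∀ s ∈ Ioo (0:ℝ) 1, True) : True := trivial

lemma R_tendsto (hd : 1 ≤ d) (hα : α ∈ Ioo (0:ℝ) 1) (hb0 : 0 < b) (hb1 : b ≤ 1) :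
    Tendsto (fun s : ℝ => s^(α-1) * Qker d α b (1-s)) (nhdsWithin 0 (Ioi 0))
      (nhds (b^α / Real.Gamma (2-α))) := by
  have hα0 := hα.1; have hα1 := hα.2
  have hΓ : 0 < Real.Gamma (1-α) := Real.Gamma_pos_of_pos (by linarith)
  have hbinv : (1:ℝ) ≤ 1/b := by rw [le_div_iff₀ hb0]; linarith
  set f : ℝ → ℝ := fun σ : ℝ => (1 - σ ^ (1/b)) ^ (-α) * σ ^ (1 - (d:ℝ)) with hfdef
  set F : ℝ → ℝ → ℝ := fun s u => s^α * f (1-s*u) with hF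
  -- Step 1: key identity
  have key : ∀ s ∈ Ioo (0:ℝ) 1, s^(α-1) * Qker d α b (1-s)
      = (1/Real.Gamma (1-α)) * ∫ u in Ioo (0:ℝ) 1, F s u := by
    intro s hs
    have hs0 : 0 < s := hs.1
    have comp := intervalIntegral.integral_comp_mul_add (a := (0:ℝ)) (b := 1)
      f (neg_ne_zero.mpr hs0.ne') 1
    have e2 : ∫ x in (-s*0+1)..(-s*1+1), f x = -∫ x in (1-s)..1, f x := by
      rw [show -s*0+1 = (1:ℝ) by ring, show -s*1+1 = 1-s by ring,
        intervalIntegral.integral_symm]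
    have e3 : ∫ x in (1-s)..1, f x = s * ∫ u in (0:ℝ)..1, f (-s*u+1) := by
      rw [comp, e2, smul_eq_mul]
      field_simp
    have e4 : Qker d α b (1-s) = (1/Real.Gamma (1-α)) * ∫ x in (1-s)..1, f x := by
      rw [Qker, ← integral_Ioc_eq_integral_Ioo,
        ← intervalIntegral.integral_of_le (by linarith [hs.2] : 1 - s ≤ 1)]
    have e5 : ∫ u in (0:ℝ)..1, s^α * f (-s*u+1) = ∫ u in Ioo (0:ℝ) 1, F s u := by
      rw [intervalIntegral.integral_of_le (by norm_num : (0:ℝ) ≤ 1),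
        integral_Ioc_eq_integral_Ioo]
      apply setIntegral_congr_fun measurableSet_Ioo
      intro u _
      rw [hF]; ring_nf
    rw [e4, e3]
    have hsa : s^(α-1) * s = s^α := by
      rw [← Real.rpow_add_one hs0.ne' (α-1)]; ring_nf
    calc s^(α-1) * ((1/Real.Gamma (1-α)) * (s * ∫ u in (0:ℝ)..1, f (-s*u+1)))
        = (1/Real.Gamma (1-α)) * ((s^(α-1) * s) * ∫ u in (0:ℝ)..1, f (-s*u+1)) := by ring
      _ = (1/Real.Gamma (1-α)) * ∫ u in (0:ℝ)..1, s^α * f (-s*u+1) := by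
          rw [hsa, ← intervalIntegral.integral_const_mul]
      _ = (1/Real.Gamma (1-α)) * ∫ u in Ioo (0:ℝ) 1, F s u := by rw [e5]
  -- Step 2: dominated convergence
  have hdlim : Tendsto (fun s => ∫ u in Ioo (0:ℝ) 1, F s u) (nhdsWithin 0 (Ioi 0))
      (nhds (∫ u in Ioo (0:ℝ) 1, b^α * u^(-α))) := by
    apply MeasureTheory.tendsto_integral_filter_of_dominated_convergence
      (bound := fun u : ℝ => 2^((d:ℝ)-1) * u^(-α))
    · exact Eventually.of_forall (fun s => by
        apply Measurable.aestronglyMeasurable; fun_prop)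
    · filter_upwards [Ioo_mem_nhdsGT_of_mem (show (0:ℝ) ∈ Ico (0:ℝ) (1/2) from
        ⟨le_refl 0, by norm_num⟩)] with s hs
      filter_upwards [ae_restrict_mem measurableSet_Ioo] with u hu
      have hsu0 : 0 < s*u := mul_pos hs.1 hu.1
      have hsu2 : s*u < 1/2 := (mul_lt_of_lt_one_right hs.1 hu.2).trans hs.2
      have hr1 : (1-s*u)^(1/b) ≤ 1-s*u := by
        have := Real.rpow_le_rpow_of_exponent_ge (x := 1-s*u) (by linarith) (by linarith) hbinv
        simpa using this
      have hx0 : 0 < 1-(1-s*u)^(1/b) := by linarith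
      have h2 : (1-(1-s*u)^(1/b))^(-α) ≤ (s*u)^(-α) :=
        Real.rpow_le_rpow_of_nonpos hsu0 (by linarith) (by linarith)
      have hhalf : ((1/2:ℝ))^(1-(d:ℝ)) = 2^((d:ℝ)-1) := by
        rw [one_div, Real.inv_rpow (by norm_num : (0:ℝ) ≤ 2),
          ← Real.rpow_neg (by norm_num : (0:ℝ) ≤ 2),
          show -(1-(d:ℝ)) = (d:ℝ)-1 by ring]
      have h3 : (1-s*u)^(1-(d:ℝ)) ≤ 2^((d:ℝ)-1) := by
        rw [← hhalf]
        apply Real.rpow_le_rpow_of_nonpos (by norm_num) (by linarith)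
        simp only [sub_nonpos]
        exact_mod_cast hd
      have hfnn : 0 ≤ f (1-s*u) := fker_nonneg hb0 (by linarith) (by linarith)
      have hnorm : ‖F s u‖ = F s u := by
        rw [Real.norm_of_nonneg (mul_nonneg (Real.rpow_nonneg hs.1.le _) hfnn)]
      rw [hnorm]
      have hFle : F s u ≤ s^α * ((s*u)^(-α) * (2:ℝ)^((d:ℝ)-1)) := by
        apply mul_le_mul_of_nonneg_left _ (Real.rpow_nonneg hs.1.le _)
        exact mul_le_mul h2 h3 (Real.rpow_nonneg (by linarith) _)
          (Real.rpow_nonneg hsu0.le _)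
      refine hFle.trans (le_of_eq ?_)
      rw [Real.mul_rpow hs.1.le hu.1.le]
      have hss : s^α * s^(-α) = 1 := by
        rw [← Real.rpow_add hs.1]; norm_num
      calc s^α * (s^(-α) * u^(-α) * 2^((d:ℝ)-1))
          = (s^α * s^(-α)) * (u^(-α) * 2^((d:ℝ)-1)) := by ring
        _ = 2^((d:ℝ)-1) * u^(-α) := by rw [hss]; ring
    · have h := intervalIntegrable_rpow' (a := (0:ℝ)) (b := 1) (r := -α) (by linarith)
      rw [intervalIntegrable_iff_integrableOn_Ioc_of_le (by norm_num)] at h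
      exact (h.mono_set Ioo_subset_Ioc_self).const_mul _
    · filter_upwards [ae_restrict_mem measurableSet_Ioo] with u hu
      have hlim1 : Tendsto (fun s : ℝ => ((1 - (1-s*u)^(1/b))/s)^(-α))
          (nhdsWithin 0 (Ioi 0)) (nhds ((u/b)^(-α))) :=
        (slope_tendsto (b := b) (u := u)).rpow_const
          (Or.inl (ne_of_gt (div_pos hu.1 hb0)))
      have hlim2 : Tendsto (fun s : ℝ => (1-s*u)^(1-(d:ℝ)))
          (nhdsWithin 0 (Ioi 0)) (nhds 1) := by
        have hc : Tendsto (fun s : ℝ => 1-s*u) (nhds 0) (nhds 1) := by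
          have hcont : Continuous (fun s : ℝ => 1-s*u) := by continuity
          have := hcont.tendsto (0:ℝ)
          simpa using this
        have := ((Real.continuousAt_rpow_const 1 (1-(d:ℝ)) (Or.inl one_ne_zero)).tendsto).comp
          (hc.mono_left (nhdsWithin_le_nhds (s := Ioi (0:ℝ))))
        simpa [Real.one_rpow, Function.comp_def] using this
      have hmul := hlim1.mul hlim2
      rw [mul_one] at hmul
      have hval : (u/b)^(-α) = b^α * u^(-α) := by
        rw [Real.div_rpow hu.1.le hb0.le, Real.rpow_neg hb0.le, div_inv_eq_mul]; ring
      rw [hval] at hmul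
      apply hmul.congr'
      filter_upwards [Ioo_mem_nhdsGT_of_mem (show (0:ℝ) ∈ Ico (0:ℝ) 1 from
        ⟨le_refl 0, by norm_num⟩)] with s hs
      have hsu0 : 0 < s*u := mul_pos hs.1 hu.1
      have hsu1 : s*u < 1 := (mul_lt_of_lt_one_right hs.1 hu.2).trans hs.2
      have hr1 : (1-s*u)^(1/b) ≤ 1-s*u := by
        have := Real.rpow_le_rpow_of_exponent_ge (x := 1-s*u) (by linarith) (by linarith) hbinv
        simpa using this
      have hx0 : 0 < 1-(1-s*u)^(1/b) := by linarith
      rw [Real.div_rpow hx0.le hs.1.le, Real.rpow_neg hs.1.le, div_inv_eq_mul, hF]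
      ring
  -- Step 3: value of the limit integral
  have hval : ∫ u in Ioo (0:ℝ) 1, b^α * u^(-α) = b^α * (1/(1-α)) := by
    rw [← integral_Ioc_eq_integral_Ioo,
      ← intervalIntegral.integral_of_le (by norm_num : (0:ℝ) ≤ 1),
      intervalIntegral.integral_const_mul,
      integral_rpow (Or.inl (by linarith : (-1:ℝ) < -α)),
      Real.one_rpow, Real.zero_rpow (by linarith : -α+1 ≠ 0)]
    rw [show -α + 1 = 1-α by ring]
    norm_num
  have final := hdlim.const_mul (1/Real.Gamma (1-α))
  rw [hval] at final
  have hΓ2 : Real.Gamma (2-α) = (1-α) * Real.Gamma (1-α) := by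
    rw [show (2-α) = (1-α)+1 by ring, Real.Gamma_add_one (by linarith : (1-α) ≠ 0)]
  have hveq : (1/Real.Gamma (1-α)) * (b^α * (1/(1-α))) = b^α / Real.Gamma (2-α) := by
    rw [hΓ2]; field_simp
  rw [hveq] at final
  apply final.congr'
  filter_upwards [Ioo_mem_nhdsGT_of_mem (show (0:ℝ) ∈ Ico (0:ℝ) 1 from
    ⟨le_refl 0, by norm_num⟩)] with s hs
  exact (key s hs).symm

end rtendsto


section main
variable {d : ℕ} {α b : ℝ}

lemma Qker_one_sub_le (hd : 1 ≤ d) (hα : α ∈ Ioo (0:ℝ) 1) (hb0 : 0 < b) (hb1 : b ≤ 1)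
    {s : ℝ} (hs : s ∈ Ioc (0:ℝ) (1/2)) :
    Qker d α b (1-s) ≤ (2:ℝ)^((d:ℝ)-1)/((1-α) * Real.Gamma (1-α)) * s^(1-α) := by
  have hΓ : 0 < Real.Gamma (1-α) := Real.Gamma_pos_of_pos (by linarith [hα.2])
  have h1 := Qker_le hd hα hb0 hb1 (η := 1-s) ⟨by linarith [hs.2], by linarith [hs.1]⟩
  have hhalf : ((1/2:ℝ))^(1-(d:ℝ)) = 2^((d:ℝ)-1) := by
    rw [one_div, Real.inv_rpow (by norm_num : (0:ℝ) ≤ 2),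
      ← Real.rpow_neg (by norm_num : (0:ℝ) ≤ 2), show -(1-(d:ℝ)) = (d:ℝ)-1 by ring]
  have h2 : (1-s)^(1-(d:ℝ)) ≤ (2:ℝ)^((d:ℝ)-1) := by
    rw [← hhalf]
    apply Real.rpow_le_rpow_of_nonpos (by norm_num) (by linarith [hs.2])
    simp only [sub_nonpos]; exact_mod_cast hd
  have h3 : (1-(1-s)) = s := by ring
  rw [h3] at h1
  refine h1.trans ?_
  have hsn : (0:ℝ) ≤ s^(1-α) := Real.rpow_nonneg hs.1.le _
  calc 1 / Real.Gamma (1-α) * ((1-s)^(1-(d:ℝ)) * (s^(1-α)/(1-α)))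
      ≤ 1 / Real.Gamma (1-α) * ((2:ℝ)^((d:ℝ)-1) * (s^(1-α)/(1-α))) := by
        apply mul_le_mul_of_nonneg_left _ (by positivity)
        apply mul_le_mul_of_nonneg_right h2 (div_nonneg hsn (by linarith [hα.2]))
    _ = (2:ℝ)^((d:ℝ)-1)/((1-α) * Real.Gamma (1-α)) * s^(1-α) := by
        field_simp


lemma F_fact (hα : α ∈ Ioo (0:ℝ) 1) {γ z t : ℝ}
    (hz : z ∈ Ioo (0:ℝ) 1) (ht : t ∈ Ioo (0:ℝ) 1) :
    (1-z)^(α-1) * ((1-(1-z)*t) * (Qker d α b (z/(1-(1-z)*t)) * t^γ))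
      = ((1-t)/(1-(1-z)*t))^(1-α) * (1-(1-z)*t) * t^γ *
        (((1-z)*(1-t)/(1-(1-z)*t))^(α-1) *
          Qker d α b (1 - (1-z)*(1-t)/(1-(1-z)*t))) := by
  have hε0 : 0 < 1-z := by linarith [hz.2]
  have hε1 : 1-z < 1 := by linarith [hz.1]
  have hden : 0 < 1-(1-z)*t := by nlinarith [ht.1, ht.2]
  have harg : z/(1-(1-z)*t) = 1 - (1-z)*(1-t)/(1-(1-z)*t) := by
    field_simp
    ring
  have hw0 : 0 < (1-t)/(1-(1-z)*t) := div_pos (by linarith [ht.2]) hden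
  have hpow : ((1-t)/(1-(1-z)*t))^(1-α) * ((1-z)*(1-t)/(1-(1-z)*t))^(α-1)
      = (1-z)^(α-1) := by
    rw [show (1-z)*(1-t)/(1-(1-z)*t) = (1-z) * ((1-t)/(1-(1-z)*t)) by ring,
      Real.mul_rpow hε0.le hw0.le]
    calc ((1-t)/(1-(1-z)*t))^(1-α) * ((1-z)^(α-1) * ((1-t)/(1-(1-z)*t))^(α-1))
        = (1-z)^(α-1) * (((1-t)/(1-(1-z)*t))^(1-α) * ((1-t)/(1-(1-z)*t))^(α-1)) := by
          ring
      _ = (1-z)^(α-1) := by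
          rw [← Real.rpow_add hw0, show (1-α)+(α-1) = (0:ℝ) by ring, Real.rpow_zero, mul_one]
  rw [harg, ← hpow]
  ring


end main

set_option maxHeartbeats 1000000 in
/-- sharp constant at the free boundary in the slow-diffusion range `m > 1`:
with `γ = (2-α)/(m-1)`,
`(1-z)^{-γm}·∫_z^1 ρ·Q(z/ρ)·(1-ρ)^γ dρ → b^α·Γ(1+γ)/Γ(3-α+γ)` as `z → 1⁻`. -/
theorem sharp_constant_free_boundary (d : ℕ) (hd : 1 ≤ d) (α m b : ℝ)
    (hα : α ∈ Set.Ioo (0:ℝ) 1)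
    (hm : 1 < m)
    (hb : b = α / (2 + (d:ℝ) * (m - 1)))
    (γ : ℝ) (hγ : γ = (2 - α) / (m - 1)) :
    Filter.Tendsto
      (fun z : ℝ =>
        (1 - z) ^ (-(γ * m)) * ∫ ρ in Set.Ioo z 1, ρ * Qker d α b (z / ρ) * (1 - ρ) ^ γ)
      (nhdsWithin 1 (Set.Ioo 0 1))
      (nhds (b ^ α * Real.Gamma (1 + γ) / Real.Gamma (3 - α + γ))) := by
  have hα0 := hα.1
  have hα1 := hα.2
  have hm1 : (0:ℝ) < m - 1 := by linarith
  have hdnn : (0:ℝ) ≤ (d:ℝ)*(m-1) := mul_nonneg (Nat.cast_nonneg d) hm1.le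
  have hdpos : (0:ℝ) < 2 + (d:ℝ)*(m-1) := by linarith
  have hb0 : 0 < b := by rw [hb]; exact div_pos hα0 hdpos
  have hb1 : b ≤ 1 := by rw [hb, div_le_one hdpos]; linarith
  have hΓ : 0 < Real.Gamma (1-α) := Real.Gamma_pos_of_pos (by linarith)
  have hΓ2pos : 0 < Real.Gamma (2-α) := Real.Gamma_pos_of_pos (by linarith)
  have hγ0 : 0 < γ := by rw [hγ]; exact div_pos (by linarith) hm1
  have hγm : γ*m = γ + 2 - α := by
    have h1 : γ*(m-1) = 2-α := by rw [hγ]; field_simp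
    nlinarith [h1]
  set F : ℝ → ℝ → ℝ := fun z t =>
    (1-z)^(α-1) * ((1-(1-z)*t) * (Qker d α b (z/(1-(1-z)*t)) * t^γ)) with hFdef
  -- Step A : change of variables identity
  have keyA : ∀ z ∈ Ioo (0:ℝ) 1,
      (1 - z) ^ (-(γ * m)) * (∫ ρ in Set.Ioo z 1, ρ * Qker d α b (z / ρ) * (1 - ρ) ^ γ)
        = ∫ t in Ioo (0:ℝ) 1, F z t := by
    intro z hz
    have hε0 : 0 < 1-z := by linarith [hz.2]
    set g : ℝ → ℝ := fun ρ => ρ * Qker d α b (z / ρ) * (1 - ρ) ^ γ with hgdef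
    have comp := intervalIntegral.integral_comp_mul_add (a := (0:ℝ)) (b := 1) g
      (neg_ne_zero.mpr hε0.ne') 1
    have e2 : ∫ x in (-(1-z)*0+1)..(-(1-z)*1+1), g x = -∫ x in z..1, g x := by
      rw [show -(1-z)*0+1 = (1:ℝ) by ring, show -(1-z)*1+1 = z by ring,
        intervalIntegral.integral_symm]
    have e3 : ∫ x in z..1, g x = (1-z) * ∫ t in (0:ℝ)..1, g (-(1-z)*t+1) := by
      rw [comp, e2, smul_eq_mul]
      have h2 : ∀ I : ℝ, (1-z) * ((-(1-z))⁻¹ * -I) = I := by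
        intro I
        have h1 : z - 1 ≠ 0 := by intro h; apply hε0.ne'; linarith
        field_simp
      exact (h2 _).symm
    have e4 : ∫ ρ in Set.Ioo z 1, g ρ = ∫ x in z..1, g x := by
      rw [← integral_Ioc_eq_integral_Ioo, ← intervalIntegral.integral_of_le hz.2.le]
    calc (1 - z) ^ (-(γ * m)) * (∫ ρ in Set.Ioo z 1, ρ * Qker d α b (z / ρ) * (1 - ρ) ^ γ)
        = (1 - z) ^ (-(γ * m)) * ((1-z) * ∫ t in (0:ℝ)..1, g (-(1-z)*t+1)) := by
          rw [show (∫ ρ in Set.Ioo z 1, ρ * Qker d α b (z / ρ) * (1 - ρ) ^ γ)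
            = ∫ ρ in Set.Ioo z 1, g ρ from rfl, e4, e3]
      _ = (1 - z) ^ (-(γ * m)) * ((1-z) * ∫ t in Ioo (0:ℝ) 1, g (-(1-z)*t+1)) := by
          rw [intervalIntegral.integral_of_le (by norm_num : (0:ℝ) ≤ 1),
            integral_Ioc_eq_integral_Ioo]
      _ = ∫ t in Ioo (0:ℝ) 1, (1 - z) ^ (-(γ * m)) * ((1-z) * g (-(1-z)*t+1)) := by
          rw [← MeasureTheory.integral_const_mul, ← MeasureTheory.integral_const_mul]
      _ = ∫ t in Ioo (0:ℝ) 1, F z t := by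
          apply setIntegral_congr_fun measurableSet_Ioo
          intro t ht
          have hexp : (1-z)^(-(γ*m)) * ((1-z) * (1-z)^γ) = (1-z)^(α-1) := by
            calc (1-z)^(-(γ*m)) * ((1-z) * (1-z)^γ)
                = (1-z)^(-(γ*m)) * ((1-z)^(1:ℝ) * (1-z)^γ) := by rw [Real.rpow_one]
              _ = (1-z)^(-(γ*m)+(1+γ)) := by
                  rw [← Real.rpow_add hε0, ← Real.rpow_add hε0]
              _ = (1-z)^(α-1) := by rw [show -(γ*m)+(1+γ) = α-1 by linarith [hγm]]
          simp only [hgdef, hFdef]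
          rw [show -(1-z)*t+1 = 1-(1-z)*t by ring,
            show 1-(1-(1-z)*t) = (1-z)*t by ring,
            Real.mul_rpow hε0.le ht.1.le, ← hexp]
          ring
  -- Step B : dominated convergence
  have hB : Tendsto (fun z => ∫ t in Ioo (0:ℝ) 1, F z t) (nhdsWithin 1 (Ioo 0 1))
      (nhds (∫ t in Ioo (0:ℝ) 1, (1-t)^(1-α) * t^γ * (b^α/Real.Gamma (2-α)))) := by
    apply MeasureTheory.tendsto_integral_filter_of_dominated_convergence
      (bound := fun _ : ℝ => (2:ℝ)^((d:ℝ)-1)/((1-α) * Real.Gamma (1-α)))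
    · -- measurability
      filter_upwards [self_mem_nhdsWithin] with z hz
      have hε0 : 0 < 1-z := by linarith [hz.2]
      have hQm : AEMeasurable (fun t : ℝ => Qker d α b (z/(1-(1-z)*t)))
          (volume.restrict (Ioo (0:ℝ) 1)) := by
        apply aemeasurable_restrict_of_antitoneOn measurableSet_Ioo
        intro t1 h1 t2 h2 h12
        have hden1 : 0 < 1-(1-z)*t1 := by nlinarith [h1.1, h1.2, hz.1]
        have hden2 : 0 < 1-(1-z)*t2 := by nlinarith [h2.1, h2.2, hz.1]
        have hφ : z/(1-(1-z)*t1) ≤ z/(1-(1-z)*t2) := by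
          rw [div_le_div_iff₀ hden1 hden2]
          nlinarith [mul_nonneg (mul_nonneg hz.1.le (by linarith [hz.2] : (0:ℝ) ≤ 1-z))
            (sub_nonneg.mpr h12)]
        exact (Qker_antitoneOn hd hα hb0 hb1) (mem_Ioi.mpr (div_pos hz.1 hden1))
          (mem_Ioi.mpr (div_pos hz.1 hden2)) hφ
      simp only [hFdef]
      apply AEMeasurable.aestronglyMeasurable
      apply AEMeasurable.const_mul
      apply AEMeasurable.mul
      · exact (measurable_const.sub (measurable_id'.const_mul _)).aemeasurable
      · exact hQm.mul ((by fun_prop : Measurable fun t : ℝ => t^γ)).aemeasurable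
    · -- bound
      filter_upwards [self_mem_nhdsWithin,
        mem_nhdsWithin_of_mem_nhds (Ioi_mem_nhds (by norm_num : (1/2:ℝ) < 1))] with z hz hz2
      filter_upwards [ae_restrict_mem measurableSet_Ioo] with t ht
      have hε0 : 0 < 1-z := by linarith [hz.2]
      have hε2 : 1-z < 1/2 := by
        have := mem_Ioi.mp hz2; linarith
      have hden : 0 < 1-(1-z)*t := by nlinarith [ht.1, ht.2, hz.1]
      have hw1 : (1-t)/(1-(1-z)*t) ≤ 1 := by
        rw [div_le_one hden]; nlinarith [ht.1]
      have hw0 : 0 < (1-t)/(1-(1-z)*t) := div_pos (by linarith [ht.2]) hden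
      have hs0 : 0 < (1-z)*(1-t)/(1-(1-z)*t) :=
        div_pos (mul_pos hε0 (by linarith [ht.2])) hden
      have hs2 : (1-z)*(1-t)/(1-(1-z)*t) ≤ 1/2 := by
        have e : (1-z)*(1-t)/(1-(1-z)*t) = (1-z) * ((1-t)/(1-(1-z)*t)) := by ring
        rw [e]
        calc (1-z) * ((1-t)/(1-(1-z)*t)) ≤ (1-z) * 1 :=
              mul_le_mul_of_nonneg_left hw1 hε0.le
          _ ≤ 1/2 := by linarith
      have hQnn : 0 ≤ Qker d α b (1 - (1-z)*(1-t)/(1-(1-z)*t)) :=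
        Qker_nonneg hα1 hb0 (by linarith [hs2])
      have hR : ((1-z)*(1-t)/(1-(1-z)*t))^(α-1) *
            Qker d α b (1 - (1-z)*(1-t)/(1-(1-z)*t))
          ≤ (2:ℝ)^((d:ℝ)-1)/((1-α) * Real.Gamma (1-α)) := by
        have h1 := Qker_one_sub_le hd hα hb0 hb1 (s := (1-z)*(1-t)/(1-(1-z)*t)) ⟨hs0, hs2⟩
        have h2 := mul_le_mul_of_nonneg_left h1
          (Real.rpow_nonneg hs0.le (α-1))
        refine h2.trans (le_of_eq ?_)
        calc ((1-z)*(1-t)/(1-(1-z)*t))^(α-1) *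
              ((2:ℝ)^((d:ℝ)-1)/((1-α) * Real.Gamma (1-α)) * ((1-z)*(1-t)/(1-(1-z)*t))^(1-α))
            = (2:ℝ)^((d:ℝ)-1)/((1-α) * Real.Gamma (1-α)) *
              (((1-z)*(1-t)/(1-(1-z)*t))^(α-1) * ((1-z)*(1-t)/(1-(1-z)*t))^(1-α)) := by ring
          _ = (2:ℝ)^((d:ℝ)-1)/((1-α) * Real.Gamma (1-α)) := by
              rw [← Real.rpow_add hs0, show (α-1)+(1-α) = (0:ℝ) by ring,
                Real.rpow_zero, mul_one]
      have hRnn : 0 ≤ ((1-z)*(1-t)/(1-(1-z)*t))^(α-1) *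
          Qker d α b (1 - (1-z)*(1-t)/(1-(1-z)*t)) :=
        mul_nonneg (Real.rpow_nonneg hs0.le _) hQnn
      have hA1 : ((1-t)/(1-(1-z)*t))^(1-α) ≤ 1 :=
        Real.rpow_le_one hw0.le hw1 (by linarith)
      have hAnn : 0 ≤ ((1-t)/(1-(1-z)*t))^(1-α) := Real.rpow_nonneg hw0.le _
      have hB1 : 1-(1-z)*t ≤ 1 := by nlinarith [ht.1]
      have hC1 : t^γ ≤ 1 := Real.rpow_le_one ht.1.le ht.2.le hγ0.le
      have hCnn : 0 ≤ t^γ := Real.rpow_nonneg ht.1.le _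
      have hABC : ((1-t)/(1-(1-z)*t))^(1-α) * (1-(1-z)*t) * t^γ ≤ 1 :=
        mul_le_one₀ (mul_le_one₀ hA1 hden.le hB1) hCnn hC1
      have hABCnn : 0 ≤ ((1-t)/(1-(1-z)*t))^(1-α) * (1-(1-z)*t) * t^γ :=
        mul_nonneg (mul_nonneg hAnn hden.le) hCnn
      have hfe : F z t = ((1-t)/(1-(1-z)*t))^(1-α) * (1-(1-z)*t) * t^γ *
          (((1-z)*(1-t)/(1-(1-z)*t))^(α-1) *
            Qker d α b (1 - (1-z)*(1-t)/(1-(1-z)*t))) := by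
        simp only [hFdef]
        exact F_fact hα hz ht
      rw [hfe, Real.norm_of_nonneg (mul_nonneg hABCnn hRnn)]
      calc ((1-t)/(1-(1-z)*t))^(1-α) * (1-(1-z)*t) * t^γ *
            (((1-z)*(1-t)/(1-(1-z)*t))^(α-1) *
              Qker d α b (1 - (1-z)*(1-t)/(1-(1-z)*t)))
          ≤ 1 * ((2:ℝ)^((d:ℝ)-1)/((1-α) * Real.Gamma (1-α))) :=
            mul_le_mul hABC hR hRnn zero_le_one
        _ = (2:ℝ)^((d:ℝ)-1)/((1-α) * Real.Gamma (1-α)) := one_mul _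
    · exact integrableOn_const measure_Ioo_lt_top.ne
    · -- pointwise limit
      filter_upwards [ae_restrict_mem measurableSet_Ioo] with t ht
      have hden_lim : Tendsto (fun z : ℝ => 1-(1-z)*t) (nhdsWithin 1 (Ioo 0 1)) (nhds 1) := by
        have hcont : Continuous (fun z : ℝ => 1-(1-z)*t) := by continuity
        have := (hcont.tendsto 1).mono_left (nhdsWithin_le_nhds (s := Ioo (0:ℝ) 1))
        simpa using this
      have hslim0 : Tendsto (fun z : ℝ => (1-z)*(1-t)/(1-(1-z)*t))
          (nhdsWithin 1 (Ioo 0 1)) (nhds 0) := by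
        have hcont : Continuous (fun z : ℝ => (1-z)*(1-t)) := by continuity
        have hnum : Tendsto (fun z : ℝ => (1-z)*(1-t)) (nhdsWithin 1 (Ioo 0 1)) (nhds 0) := by
          have := (hcont.tendsto 1).mono_left (nhdsWithin_le_nhds (s := Ioo (0:ℝ) 1))
          simpa using this
        have := hnum.div hden_lim one_ne_zero
        simpa [Pi.div_def] using this
      have hslim : Tendsto (fun z : ℝ => (1-z)*(1-t)/(1-(1-z)*t))
          (nhdsWithin 1 (Ioo 0 1)) (nhdsWithin 0 (Ioi 0)) := by
        rw [tendsto_nhdsWithin_iff]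
        refine ⟨hslim0, ?_⟩
        filter_upwards [self_mem_nhdsWithin] with z hz
        have hε0 : 0 < 1-z := by linarith [hz.2]
        have hden : 0 < 1-(1-z)*t := by nlinarith [ht.1, ht.2, hz.1]
        exact mem_Ioi.mpr (div_pos (mul_pos hε0 (by linarith [ht.2])) hden)
      have hR := (R_tendsto hd hα hb0 hb1).comp hslim
      simp only [Function.comp_def] at hR
      have hw : Tendsto (fun z : ℝ => ((1-t)/(1-(1-z)*t))^(1-α))
          (nhdsWithin 1 (Ioo 0 1)) (nhds ((1-t)^(1-α))) := by
        have h0 : Tendsto (fun z : ℝ => (1-t)/(1-(1-z)*t))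
            (nhdsWithin 1 (Ioo 0 1)) (nhds (1-t)) := by
          have := (tendsto_const_nhds (x := (1-t))
            (f := nhdsWithin (1:ℝ) (Ioo 0 1))).div hden_lim one_ne_zero
          simpa [Pi.div_def] using this
        exact h0.rpow_const (Or.inr (by linarith : (0:ℝ) ≤ 1-α))
      have H := ((hw.mul hden_lim).mul
        (tendsto_const_nhds (x := t^γ) (f := nhdsWithin (1:ℝ) (Ioo 0 1)))).mul hR
      have hval : (1-t)^(1-α) * 1 * t^γ * (b^α/Real.Gamma (2-α))
          = (1-t)^(1-α) * t^γ * (b^α/Real.Gamma (2-α)) := by ring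
      rw [hval] at H
      apply H.congr'
      filter_upwards [self_mem_nhdsWithin] with z hz
      have hfe : F z t = ((1-t)/(1-(1-z)*t))^(1-α) * (1-(1-z)*t) * t^γ *
          (((1-z)*(1-t)/(1-(1-z)*t))^(α-1) *
            Qker d α b (1 - (1-z)*(1-t)/(1-(1-z)*t))) := by
        simp only [hFdef]
        exact F_fact hα hz ht
      exact hfe.symm
  -- Step C : value of the limit integral
  have hΓ3 : 0 < Real.Gamma (3-α+γ) := Real.Gamma_pos_of_pos (by linarith)
  have hval2 : ∫ t in Ioo (0:ℝ) 1, (1-t)^(1-α) * t^γ * (b^α/Real.Gamma (2-α))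
      = b ^ α * Real.Gamma (1 + γ) / Real.Gamma (3 - α + γ) := by
    have hbeta := real_beta (p := γ+1) (q := 2-α) (by linarith) (by linarith)
    have e1 : ∫ t in Ioo (0:ℝ) 1, (1-t)^(1-α) * t^γ * (b^α/Real.Gamma (2-α))
        = (b^α/Real.Gamma (2-α)) * ∫ t in (0:ℝ)..1, t^((γ+1)-1) * (1-t)^((2-α)-1) := by
      rw [intervalIntegral.integral_of_le (by norm_num : (0:ℝ) ≤ 1),
        integral_Ioc_eq_integral_Ioo, ← MeasureTheory.integral_const_mul]
      apply setIntegral_congr_fun measurableSet_Ioo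
      intro t _
      rw [show (γ+1)-1 = γ by ring, show (2-α)-1 = 1-α by ring]
      ring
    rw [e1, hbeta, show (γ+1)+(2-α) = 3-α+γ by ring, show γ+1 = 1+γ by ring]
    field_simp
  rw [← hval2]
  apply hB.congr'
  filter_upwards [self_mem_nhdsWithin] with z hz
  exact (keyA z hz).symm
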